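/- Let f be a derivation of N. Then: (i) for every A ∈ N^{12} and all indices r, s, the entry f(A) r s is zero unless b r = 1, or (b r, b s) = (2, t), or (b r, b s) = (3, t); and (ii) for every A ∈ N^{t−1,t} and all indices r, s, the entry f(A) r s is zero unless b s = t, or (b r, b s) = (1, t−1), or (b r, b s) = (1, t−2). -/

import Mathlib

/-- `A` is a strictly block upper triangular matrix relative to the block function `b`
(index `r` lies in block `b r`): `A r s = 0` whenever `b r ≥ b s`. -/
def InN {F : Type*} [Field F] {n : ℕ} (b : Fin n → ℕ)
    (A : Matrix (Fin n) (Fin n) F) : Prop :=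
  ∀ r s, b s ≤ b r → A r s = 0

/-- `A` lies in the `(i,j)` block `N^{ij}`: `A r s = 0` unless `b r = i` and `b s = j`. -/
def InBlk {F : Type*} [Field F] {n : ℕ} (b : Fin n → ℕ) (i j : ℕ)
    (A : Matrix (Fin n) (Fin n) F) : Prop :=
  ∀ r s, ¬(b r = i ∧ b s = j) → A r s = 0

/-- `f` is a derivation of the Lie algebra `N` of strictly block upper triangular matrices:
it maps `N` into `N` and satisfies `f [X,Y] = [f X, Y] + [X, f Y]` on `N`,
where `[X,Y] = XY - YX`. -/
def IsDerN {F : Type*} [Field F] {n : ℕ} (b : Fin n → ℕ)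
    (f : Matrix (Fin n) (Fin n) F →ₗ[F] Matrix (Fin n) (Fin n) F) : Prop :=
  (∀ A, InN b A → InN b (f A)) ∧
  ∀ X Y, InN b X → InN b Y →
    f (X * Y - Y * X) = (f X * Y - Y * f X) + (X * f Y - f Y * X)

open Matrix

section Aux

variable {F : Type*} [Field F] {n t : ℕ} {b : Fin n → ℕ}

lemma aux_mulE (B : Matrix (Fin n) (Fin n) F) (p q r s : Fin n) :
    (B * Matrix.single p q (1:F)) r s = if s = q then B r p else 0 := by
  rw [Matrix.mul_apply]
  by_cases h : s = q
  · subst h; simp [Matrix.single, and_comm]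
  · simp [Matrix.single, h, show q ≠ s from fun h' => h h'.symm]

lemma aux_Emul (B : Matrix (Fin n) (Fin n) F) (p q r s : Fin n) :
    (Matrix.single p q (1:F) * B) r s = if r = p then B q s else 0 := by
  rw [Matrix.mul_apply]
  by_cases h : r = p
  · subst h; simp [Matrix.single]
  · simp [Matrix.single, h, show p ≠ r from fun h' => h h'.symm]

lemma aux_E_inN {p q : Fin n} (hpq : b p < b q) :
    InN b (Matrix.single p q (1:F)) := by
  intro u v huv
  simp only [Matrix.single, of_apply, ite_eq_right_iff, one_ne_zero]
  rintro ⟨rfl, rfl⟩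
  omega

lemma aux_leftAnn (hlb : ∀ r, 1 ≤ b r) {A C : Matrix (Fin n) (Fin n) F}
    (hA : InBlk b 1 2 A) (hC : InN b C) : C * A = 0 := by
  ext u v
  rw [Matrix.mul_apply]
  refine Finset.sum_eq_zero fun k _ => ?_
  by_cases h : b k = 1 ∧ b v = 2
  · rw [hC u k (h.1 ▸ hlb u), zero_mul]
  · rw [hA k v h, mul_zero]

lemma aux_rowOne {A : Matrix (Fin n) (Fin n) F} (hA : InBlk b 1 2 A)
    {r : Fin n} (hr : b r ≠ 1) (C : Matrix (Fin n) (Fin n) F) (s : Fin n) :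
    (A * C) r s = 0 := by
  rw [Matrix.mul_apply]
  refine Finset.sum_eq_zero fun k _ => ?_
  rw [hA r k fun h => hr h.1, zero_mul]

lemma aux_rightAnn (hub : ∀ r, b r ≤ t) {A C : Matrix (Fin n) (Fin n) F}
    (hA : InBlk b (t - 1) t A) (hC : InN b C) : A * C = 0 := by
  ext u v
  rw [Matrix.mul_apply]
  refine Finset.sum_eq_zero fun k _ => ?_
  by_cases h : b u = t - 1 ∧ b k = t
  · rw [hC k v (h.2 ▸ hub v), mul_zero]
  · rw [hA u k h, zero_mul]

lemma aux_colT {A : Matrix (Fin n) (Fin n) F} (hA : InBlk b (t - 1) t A)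
    {s : Fin n} (hs : b s ≠ t) (C : Matrix (Fin n) (Fin n) F) (r : Fin n) :
    (C * A) r s = 0 := by
  rw [Matrix.mul_apply]
  refine Finset.sum_eq_zero fun k _ => ?_
  rw [hA k s fun h => hs h.2, mul_zero]

lemma aux_comm1 {A : Matrix (Fin n) (Fin n) F} (hA : InBlk b 1 2 A)
    {p q : Fin n} (hp : b p ≠ 2) (hq : b q ≠ 1) :
    A * Matrix.single p q (1:F) = Matrix.single p q (1:F) * A := by
  ext u v
  rw [aux_mulE, aux_Emul]
  split_ifs <;>
    simp [hA u p fun h => hp h.2, hA q v fun h => hq h.1]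

lemma aux_comm2 {A : Matrix (Fin n) (Fin n) F} (hA : InBlk b (t - 1) t A)
    {p q : Fin n} (hp : b p ≠ t) (hq : b q ≠ t - 1) :
    A * Matrix.single p q (1:F) = Matrix.single p q (1:F) * A := by
  ext u v
  rw [aux_mulE, aux_Emul]
  split_ifs <;>
    simp [hA u p fun h => hp h.2, hA q v fun h => hq h.1]

lemma aux_key {f : Matrix (Fin n) (Fin n) F →ₗ[F] Matrix (Fin n) (Fin n) F}
    (hf : IsDerN b f) {A : Matrix (Fin n) (Fin n) F} (hA : InN b A)
    {p q : Fin n} (hpq : b p < b q)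
    (hcomm : A * Matrix.single p q (1:F) = Matrix.single p q (1:F) * A)
    (r s : Fin n) :
    (f A * Matrix.single p q (1:F)) r s - (Matrix.single p q (1:F) * f A) r s
      + ((A * f (Matrix.single p q (1:F))) r s
        - (f (Matrix.single p q (1:F)) * A) r s) = 0 := by
  have h := hf.2 A (Matrix.single p q (1:F)) hA (aux_E_inN hpq)
  rw [hcomm, sub_self, map_zero] at h
  have h2 := congrFun (congrFun h r) s
  simp only [Matrix.zero_apply, Matrix.add_apply, Matrix.sub_apply] at h2
  exact h2.symm

end Aux

/-- for a derivation `f` of `N`: (i) `f(N^{12})` lies on the first block row,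
the `(2,t)` block and the `(3,t)` block; (ii) `f(N^{t-1,t})` lies on the last block column,
the `(1,t-1)` block and the `(1,t-2)` block. -/
theorem stmt5 {F : Type*} [Field F] {n t : ℕ} (b : Fin n → ℕ)
    (hn : 1 ≤ n) (ht : 3 ≤ t) (hmono : Monotone b)
    (hlb : ∀ r, 1 ≤ b r) (hub : ∀ r, b r ≤ t)
    (hsurj : ∀ k, 1 ≤ k → k ≤ t → ∃ r, b r = k)
    (f : Matrix (Fin n) (Fin n) F →ₗ[F] Matrix (Fin n) (Fin n) F)
    (hf : IsDerN b f) :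
    (∀ A, InBlk b 1 2 A → ∀ r s,
      ¬(b r = 1) → ¬(b r = 2 ∧ b s = t) → ¬(b r = 3 ∧ b s = t) →
      f A r s = 0) ∧
    (∀ A, InBlk b (t - 1) t A → ∀ r s,
      ¬(b s = t) → ¬(b r = 1 ∧ b s = t - 1) → ¬(b r = 1 ∧ b s = t - 2) →
      f A r s = 0) := by
  constructor
  · -- part (i)
    intro A hA r s hr1 h2t h3t
    have hAN : InN b A := fun u v huv => hA u v (by rintro ⟨h1, h2⟩; omega)
    have hB : InN b (f A) := hf.1 A hAN
    by_cases hlt : b s ≤ b r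
    · exact hB r s hlt
    push_neg at hlt
    have hr2 : 2 ≤ b r := by have := hlb r; omega
    by_cases hr4 : 4 ≤ b r
    · -- use p with b p = 3, X = E p r
      obtain ⟨p, hp⟩ := hsurj 3 (by omega) ht
      have hcomm := aux_comm1 hA (p := p) (q := r) (by omega) (by omega)
      have key := aux_key hf hAN (by omega) hcomm p s
      rw [aux_mulE, aux_Emul] at key
      rw [if_neg (by intro h; subst h; omega), if_pos rfl,
        aux_rowOne hA (by omega), aux_leftAnn hlb hA (hf.1 _ (aux_E_inN (by omega)))] at key
      simp at key
      exact key
    · -- b r ∈ {2,3}, so b s < t (else excluded); use q with b q = b s + 1, X = E s q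
      have hst : b s < t := by
        rcases Nat.lt_or_ge (b s) t with h | h
        · exact h
        · exfalso; have := hub s; interval_cases h' : b r <;> omega
      obtain ⟨q, hq⟩ := hsurj (b s + 1) (by omega) (by omega)
      have hcomm := aux_comm1 hA (p := s) (q := q) (by omega) (by omega)
      have key := aux_key hf hAN (by omega) hcomm r q
      rw [aux_mulE, aux_Emul] at key
      rw [if_pos rfl, if_neg (by intro h; subst h; omega),
        aux_rowOne hA (by omega), aux_leftAnn hlb hA (hf.1 _ (aux_E_inN (by omega)))] at key
      simp at key
      exact key
  · -- part (ii)
    intro A hA r s hst h1 h2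
    have hAN : InN b A := fun u v huv => hA u v (by rintro ⟨hh1, hh2⟩; omega)
    have hB : InN b (f A) := hf.1 A hAN
    by_cases hlt : b s ≤ b r
    · exact hB r s hlt
    push_neg at hlt
    by_cases hr : 2 ≤ b r ∧ b r ≠ t - 1
    · -- use p with b p = b r - 1, X = E p r
      obtain ⟨p, hp⟩ := hsurj (b r - 1) (by omega) (by have := hub r; omega)
      have hcomm := aux_comm2 hA (p := p) (q := r) (by have := hub r; omega) hr.2
      have key := aux_key hf hAN (by omega) hcomm p s
      rw [aux_mulE, aux_Emul] at key
      rw [if_neg (by intro h; subst h; omega), if_pos rfl,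
        aux_colT hA hst, aux_rightAnn hub hA (hf.1 _ (aux_E_inN (by omega)))] at key
      simp [hB p p le_rfl] at key
      exact key
    · -- b r = 1 or b r = t - 1; show b s + 3 ≤ t and use q with b q = b s + 1
      have hbs : b s + 3 ≤ t := by
        have h1' := hlb r; have h2' := hub s
        by_cases hr1 : b r = 1
        · simp [hr1] at h1 h2; omega
        · exfalso
          have : b r = t - 1 := by omega
          omega
      obtain ⟨q, hq⟩ := hsurj (b s + 1) (by omega) (by omega)
      have hcomm := aux_comm2 hA (p := s) (q := q) (by omega) (by omega)
      have key := aux_key hf hAN (by omega) hcomm r q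
      rw [aux_mulE, aux_Emul] at key
      rw [if_pos rfl, if_neg (by intro h; subst h; omega),
        aux_colT hA (show b q ≠ t by omega), aux_rightAnn hub hA (hf.1 _ (aux_E_inN (by omega)))] at key
      simp at key
      exact key
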